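/- Assume there are constants 0 < b ≤ B such that b ≤ Λ*_t(y) ≤ B for every t and every y with p(y) > 0. Then for every vector v ∈ ℝ^{N·N'}, E[Σ_{t=1}^{N} ⟨η_t(y), v⟩²] ≥ ρ·‖v‖₂², where ρ = (1 − e^{−h·b})·e^{−h·B·(N'−1)}; equivalently, the matrix E[Σ_{t=1}^{N} η_t(y) ⊗ η_t(y)] − ρ·I_{N·N'} is positive semidefinite. -/

import Mathlib

open Finset
open scoped BigOperators RealInnerProductSpace

noncomputable section

/-- Real value of a Boolean: `1` if `true`, `0` if `false`. -/
def bval (b : Bool) : ℝ := if b then 1 else 0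

/-- The time window of indices `-N'+1, …, N`. -/
def window (N N' : ℕ) : Finset ℤ := Finset.Icc (-(N' : ℤ) + 1) (N : ℤ)

/-- The probability mass function of the discrete-time Bernoulli process with
true conditional intensities `Λ`. -/
def seqPMF (N N' : ℕ) (h : ℝ) (Λ : ℤ → (ℤ → Bool) → ℝ) (y : ℤ → Bool) : ℝ :=
  ∏ t ∈ window N N',
    ((1 - bval (y t)) * Real.exp (-(h * Λ t y))
      + bval (y t) * (1 - Real.exp (-(h * Λ t y))))

/-- Extension of a window-indexed binary sequence to all of `ℤ` (by `false`). -/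
def extSeq (N N' : ℕ) (w : ↥(window N N') → Bool) : ℤ → Bool :=
  fun i => if hi : i ∈ window N N' then w ⟨i, hi⟩ else false

/-- Expectation with respect to the law of the process. -/
def expect (N N' : ℕ) (h : ℝ) (Λ : ℤ → (ℤ → Bool) → ℝ) (f : (ℤ → Bool) → ℝ) : ℝ :=
  ∑ w : ↥(window N N') → Bool, seqPMF N N' h Λ (extSeq N N' w) * f (extSeq N N' w)

/-- The index set of the kernel parameter: pairs `(i, t)` with `1 ≤ t ≤ N` and
`t - N' ≤ i ≤ t - 1`. -/
def kIdx (N N' : ℕ) : Finset (ℤ × ℤ) :=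
  (Finset.Icc (-(N' : ℤ) + 1) (N : ℤ) ×ˢ Finset.Icc 1 (N : ℤ)).filter
    (fun p => p.2 - (N' : ℤ) ≤ p.1 ∧ p.1 ≤ p.2 - 1)

/-- The space `ℝ^{N·N'}` of kernel parameters, with Euclidean structure. -/
abbrev Param (N N' : ℕ) := EuclideanSpace ℝ ↥(kIdx N N')

/-- Entry `z_{i,t}` of a kernel parameter (zero outside the index set). -/
def zent (N N' : ℕ) (z : Param N N') (i t : ℤ) : ℝ :=
  if hm : (i, t) ∈ kIdx N N' then z ⟨(i, t), hm⟩ else 0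

/-- The model intensity `Λ_t(z; y) = μ + ∑_{i = t-N'}^{t-1} y_i z_{i,t}`. -/
def modelIntensity (N N' : ℕ) (μ : ℝ) (z : Param N N') (t : ℤ) (y : ℤ → Bool) : ℝ :=
  μ + ∑ i ∈ Finset.Icc (t - (N' : ℤ)) (t - 1), bval (y i) * zent N N' z i t

/-- The history vector `η_t(y)`: entry `y_i` at index `(i, t)`, zero elsewhere. -/
def eta (N N' : ℕ) (t : ℤ) (y : ℤ → Bool) : Param N N' :=
  WithLp.toLp 2 (fun p => if p.1.2 = t then bval (y p.1.1) else 0)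

/-- The link function `φ(x) = 1 - e^{-x}`. -/
def phi (x : ℝ) : ℝ := 1 - Real.exp (-x)

/-- The per-trajectory VI vector field
`Ĝ(z; y) = ∑_{t=1}^N (φ(h Λ_t(z;y)) - y_t) η_t(y)`. -/
def Ghat (N N' : ℕ) (h μ : ℝ) (z : Param N N') (y : ℤ → Bool) : Param N N' :=
  ∑ t ∈ Finset.Icc (1 : ℤ) (N : ℤ),
    (phi (h * modelIntensity N N' μ z t y) - bval (y t)) • eta N N' t y

/-- Expectation of a vector-valued statistic with respect to the law of the process. -/
def expectVec {E : Type*} [AddCommMonoid E] [Module ℝ E]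
    (N N' : ℕ) (h : ℝ) (Λ : ℤ → (ℤ → Bool) → ℝ) (f : (ℤ → Bool) → E) : E :=
  ∑ w : ↥(window N N') → Bool, seqPMF N N' h Λ (extSeq N N' w) • f (extSeq N N' w)

/- ===================== auxiliary machinery ===================== -/

lemma prod_Icc_top (a b : ℤ) (hab : a ≤ b) (f : ℤ → ℝ) :
    ∏ x ∈ Finset.Icc a b, f x = (∏ x ∈ Finset.Icc a (b-1), f x) * f b := by
  have h1 : Finset.Icc a b = insert b (Finset.Icc a (b-1)) := by
    ext x; simp only [mem_Icc, mem_insert]; omega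
  rw [h1, Finset.prod_insert (by simp only [mem_Icc]; omega), mul_comm]

def factor (h : ℝ) (Λ : ℤ → (ℤ → Bool) → ℝ) (s : ℤ) (y : ℤ → Bool) : ℝ :=
  (1 - bval (y s)) * Real.exp (-(h * Λ s y)) + bval (y s) * (1 - Real.exp (-(h * Λ s y)))

lemma factor_false {h : ℝ} {Λ : ℤ → (ℤ → Bool) → ℝ} {s : ℤ} {y : ℤ → Bool}
    (hy : y s = false) : factor h Λ s y = Real.exp (-(h * Λ s y)) := by
  simp [factor, bval, hy]

lemma factor_true {h : ℝ} {Λ : ℤ → (ℤ → Bool) → ℝ} {s : ℤ} {y : ℤ → Bool}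
    (hy : y s = true) : factor h Λ s y = 1 - Real.exp (-(h * Λ s y)) := by
  simp [factor, bval, hy]

lemma seqPMF_eq (N N' : ℕ) (h : ℝ) (Λ : ℤ → (ℤ → Bool) → ℝ) (y : ℤ → Bool) :
    seqPMF N N' h Λ y = ∏ t ∈ window N N', factor h Λ t y := rfl

def zeroFrom (N N' : ℕ) (t : ℤ) (w : ↥(window N N') → Bool) : ↥(window N N') → Bool :=
  fun j => if (j : ℤ) < t then w j else false

section Aux

variable {N N' : ℕ} {h : ℝ} {Λ : ℤ → (ℤ → Bool) → ℝ} {b B : ℝ}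

lemma pmf_zeroFrom_pos (hh : 0 < h) (hb : 0 < b)
    (hdep : ∀ (t : ℤ) (y y' : ℤ → Bool),
      (∀ i ∈ window N N', i < t → y i = y' i) → Λ t y = Λ t y')
    (hstar : ∀ t ∈ window N N', ∀ y : ℤ → Bool,
      0 < seqPMF N N' h Λ y → b ≤ Λ t y ∧ Λ t y ≤ B) :
    ∀ (n : ℕ) (t : ℤ), t ≤ (-(N' : ℤ) + 1) + n → ∀ w : ↥(window N N') → Bool,
      0 < seqPMF N N' h Λ (extSeq N N' (zeroFrom N N' t w)) := by
  intro n
  induction n with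
  | zero =>
    intro t ht w
    rw [seqPMF_eq]
    apply Finset.prod_pos
    intro s hs
    have hsf : extSeq N N' (zeroFrom N N' t w) s = false := by
      have h1 : ¬ ((s : ℤ) < t) := by
        simp only [window, mem_Icc] at hs; omega
      simp [extSeq, zeroFrom, hs, h1]
    rw [factor_false hsf]
    exact Real.exp_pos _
  | succ n ih =>
    intro t ht w
    by_cases htn : t ≤ (-(N' : ℤ) + 1) + n
    · exact ih t htn w
    rw [seqPMF_eq]
    apply Finset.prod_pos
    intro s hs
    cases hys : extSeq N N' (zeroFrom N N' t w) s with
    | false => rw [factor_false hys]; exact Real.exp_pos _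
    | true =>
      rw [factor_true hys]
      have hst : (s : ℤ) < t := by
        by_contra hc
        simp [extSeq, zeroFrom, hs, hc] at hys
      have hlam : Λ s (extSeq N N' (zeroFrom N N' t w))
          = Λ s (extSeq N N' (zeroFrom N N' s w)) := by
        apply hdep
        intro i hi his
        simp only [extSeq, zeroFrom, hi, dif_pos]
        have h1 : i < t := lt_trans his hst
        simp [h1, his]
      have hpos : 0 < seqPMF N N' h Λ (extSeq N N' (zeroFrom N N' s w)) :=
        ih s (by omega) w
      have hbs : b ≤ Λ s (extSeq N N' (zeroFrom N N' s w)) := (hstar s hs _ hpos).1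
      rw [hlam]
      have hlt : Real.exp (-(h * Λ s (extSeq N N' (zeroFrom N N' s w)))) < 1 := by
        rw [Real.exp_lt_one_iff]; nlinarith
      linarith

lemma lam_bounds (hh : 0 < h) (hb : 0 < b)
    (hdep : ∀ (t : ℤ) (y y' : ℤ → Bool),
      (∀ i ∈ window N N', i < t → y i = y' i) → Λ t y = Λ t y')
    (hstar : ∀ t ∈ window N N', ∀ y : ℤ → Bool,
      0 < seqPMF N N' h Λ y → b ≤ Λ t y ∧ Λ t y ≤ B)
    (t : ℤ) (ht : t ∈ window N N') (w : ↥(window N N') → Bool) :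
    b ≤ Λ t (extSeq N N' w) ∧ Λ t (extSeq N N' w) ≤ B := by
  have hpos := pmf_zeroFrom_pos hh hb hdep hstar (t - (-(N' : ℤ) + 1)).toNat t (by omega) w
  have heq : Λ t (extSeq N N' w) = Λ t (extSeq N N' (zeroFrom N N' t w)) := by
    apply hdep
    intro i hi hit
    simp [extSeq, zeroFrom, hi, hit]
  rw [heq]
  exact hstar t ht _ hpos

lemma pmf_pos (hh : 0 < h) (hb : 0 < b)
    (hdep : ∀ (t : ℤ) (y y' : ℤ → Bool),
      (∀ i ∈ window N N', i < t → y i = y' i) → Λ t y = Λ t y')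
    (hstar : ∀ t ∈ window N N', ∀ y : ℤ → Bool,
      0 < seqPMF N N' h Λ y → b ≤ Λ t y ∧ Λ t y ≤ B)
    (w : ↥(window N N') → Bool) : 0 < seqPMF N N' h Λ (extSeq N N' w) := by
  have h0 : zeroFrom N N' ((N : ℤ) + 1) w = w := by
    funext j
    have hj := j.2
    simp only [window, mem_Icc] at hj
    simp only [zeroFrom]
    rw [if_pos (by omega)]
  have := pmf_zeroFrom_pos hh hb hdep hstar (N + N') ((N : ℤ) + 1) (by push_cast; omega) w
  rwa [h0] at this

lemma factor_nonneg (hh : 0 < h) (hb : 0 < b)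
    (hdep : ∀ (t : ℤ) (y y' : ℤ → Bool),
      (∀ i ∈ window N N', i < t → y i = y' i) → Λ t y = Λ t y')
    (hstar : ∀ t ∈ window N N', ∀ y : ℤ → Bool,
      0 < seqPMF N N' h Λ y → b ≤ Λ t y ∧ Λ t y ≤ B)
    (s : ℤ) (hs : s ∈ window N N') (w : ↥(window N N') → Bool) :
    0 ≤ factor h Λ s (extSeq N N' w) := by
  cases hys : extSeq N N' w s with
  | false => rw [factor_false hys]; positivity
  | true =>
    rw [factor_true hys]
    have hbs := (lam_bounds hh hb hdep hstar s hs w).1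
    have : Real.exp (-(h * Λ s (extSeq N N' w))) ≤ 1 :=
      Real.exp_le_one_iff.mpr (by nlinarith)
    linarith

end Aux

/- ===================== the core lower bound ===================== -/

def indf (i j : ℤ) (y : ℤ → Bool) : ℝ := if (y j = true ↔ j = i) then 1 else 0

def Fc (N' : ℕ) (h : ℝ) (Λ : ℤ → (ℤ → Bool) → ℝ) (i t s : ℤ) (y : ℤ → Bool) : ℝ :=
  factor h Λ s y * (if s ∈ Finset.Icc (t - (N' : ℤ)) (t-1) then indf i s y else 1)

def cc (N' : ℕ) (h b B : ℝ) (i t s : ℤ) : ℝ :=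
  if s = i then 1 - Real.exp (-(h*b))
  else if s ∈ Finset.Icc (t - (N' : ℤ)) (t-1) then Real.exp (-(h*B)) else 1

def QQ (N N' : ℕ) (h : ℝ) (Λ : ℤ → (ℤ → Bool) → ℝ) (i t k : ℤ) : ℝ :=
  ∑ w : ↥(window N N') → Bool, ∏ s ∈ Finset.Icc (-(N' : ℤ) + 1) k, Fc N' h Λ i t s (extSeq N N' w)

section Core

variable {N N' : ℕ} {h : ℝ} {Λ : ℤ → (ℤ → Bool) → ℝ} {b B : ℝ}

lemma indf_nonneg (i j : ℤ) (y : ℤ → Bool) : 0 ≤ indf i j y := by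
  unfold indf; split_ifs <;> norm_num

lemma Fc_nonneg (hh : 0 < h) (hb : 0 < b)
    (hdep : ∀ (t : ℤ) (y y' : ℤ → Bool),
      (∀ i ∈ window N N', i < t → y i = y' i) → Λ t y = Λ t y')
    (hstar : ∀ t ∈ window N N', ∀ y : ℤ → Bool,
      0 < seqPMF N N' h Λ y → b ≤ Λ t y ∧ Λ t y ≤ B)
    (i t s : ℤ) (hs : s ∈ window N N') (w : ↥(window N N') → Bool) :
    0 ≤ Fc N' h Λ i t s (extSeq N N' w) := by
  apply mul_nonneg (factor_nonneg hh hb hdep hstar s hs w)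
  split_ifs
  · exact indf_nonneg _ _ _
  · norm_num

lemma cc_nonneg (hh : 0 < h) (hb : 0 < b) (i t s : ℤ) : 0 ≤ cc N' h b B i t s := by
  unfold cc
  have h1 : Real.exp (-(h*b)) ≤ 1 := Real.exp_le_one_iff.mpr (by nlinarith)
  split_ifs <;> [linarith; positivity; norm_num]

lemma step_ineq (hh : 0 < h) (hb : 0 < b)
    (hdep : ∀ (t : ℤ) (y y' : ℤ → Bool),
      (∀ i ∈ window N N', i < t → y i = y' i) → Λ t y = Λ t y')
    (hstar : ∀ t ∈ window N N', ∀ y : ℤ → Bool,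
      0 < seqPMF N N' h Λ y → b ≤ Λ t y ∧ Λ t y ≤ B)
    (i t : ℤ) (hi1 : t - N' ≤ i) (hi2 : i ≤ t - 1)
    (k : ℤ) (hk1 : -(N' : ℤ) + 1 ≤ k) (hk2 : k ≤ N) :
    cc N' h b B i t k * QQ N N' h Λ i t (k-1) ≤ 2 * QQ N N' h Λ i t k := by
  have hkw : k ∈ window N N' := by simp only [window, mem_Icc]; omega
  set lo : ℤ := -(N' : ℤ) + 1 with hlo
  set flip : (↥(window N N') → Bool) → (↥(window N N') → Bool) :=
    fun w j => if (j : ℤ) = k then !(w j) else w j with hflip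
  have hinv : Function.Involutive flip := by
    intro w; funext j; simp only [hflip]; split_ifs <;> simp
  have hext_ne : ∀ (w : ↥(window N N') → Bool) (m : ℤ), m ≠ k →
      extSeq N N' (flip w) m = extSeq N N' w m := by
    intro w m hm
    by_cases hmw : m ∈ window N N'
    · simp [extSeq, hmw, hflip, hm]
    · simp [extSeq, hmw]
  have hext_k : ∀ w, extSeq N N' (flip w) k = !(extSeq N N' w k) := by
    intro w; simp [extSeq, hkw, hflip]
  have hlam_flip : ∀ w, Λ k (extSeq N N' (flip w)) = Λ k (extSeq N N' w) := by
    intro w; exact hdep _ _ _ (fun m _ hmk => hext_ne w m (by omega))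
  have hG : ∀ w, ∏ s ∈ Finset.Icc lo (k-1), Fc N' h Λ i t s (extSeq N N' (flip w))
      = ∏ s ∈ Finset.Icc lo (k-1), Fc N' h Λ i t s (extSeq N N' w) := by
    intro w
    apply Finset.prod_congr rfl
    intro s hs
    rw [Finset.mem_Icc] at hs
    have h1 : extSeq N N' (flip w) s = extSeq N N' w s := hext_ne w s (by omega)
    have h2 : Λ s (extSeq N N' (flip w)) = Λ s (extSeq N N' w) :=
      hdep _ _ _ (fun m _ hms => hext_ne w m (by omega))
    simp [Fc, factor, indf, h1, h2]
  have hGnn : ∀ w, 0 ≤ ∏ s ∈ Finset.Icc lo (k-1), Fc N' h Λ i t s (extSeq N N' w) := by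
    intro w
    apply Finset.prod_nonneg
    intro s hs
    rw [Finset.mem_Icc] at hs
    exact Fc_nonneg hh hb hdep hstar i t s (by simp only [window, mem_Icc]; omega) w
  have hiWt : i ∈ Finset.Icc (t - (N' : ℤ)) (t-1) := by rw [mem_Icc]; exact ⟨hi1, hi2⟩
  have hpair : ∀ w, cc N' h b B i t k
      ≤ Fc N' h Λ i t k (extSeq N N' w) + Fc N' h Λ i t k (extSeq N N' (flip w)) := by
    intro w
    have hLb := lam_bounds hh hb hdep hstar k hkw w
    set L := Λ k (extSeq N N' w) with hL
    have hE1 : Real.exp (-(h*L)) ≤ Real.exp (-(h*b)) := by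
      apply Real.exp_le_exp.mpr
      have := mul_le_mul_of_nonneg_left hLb.1 hh.le
      linarith
    have hE2 : Real.exp (-(h*B)) ≤ Real.exp (-(h*L)) := by
      apply Real.exp_le_exp.mpr
      have := mul_le_mul_of_nonneg_left hLb.2 hh.le
      linarith
    have hE0 : 0 < Real.exp (-(h*L)) := Real.exp_pos _
    cases hwk : extSeq N N' w k with
    | true =>
      have hfk : extSeq N N' (flip w) k = false := by rw [hext_k, hwk]; rfl
      have hv1 : indf i k (extSeq N N' w) = if k = i then 1 else 0 := by
        unfold indf; rw [hwk]; by_cases hki : k = i <;> simp [hki]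
      have hv2 : indf i k (extSeq N N' (flip w)) = if k = i then 0 else 1 := by
        unfold indf; rw [hfk]; by_cases hki : k = i <;> simp [hki]
      rw [Fc, Fc, factor_true hwk, factor_false hfk, hlam_flip, ← hL, hv1, hv2]
      by_cases hki : k = i
      · have hkWt : k ∈ Finset.Icc (t - (N' : ℤ)) (t-1) := by rw [hki]; exact hiWt
        rw [cc, if_pos hki, if_pos hkWt, if_pos hkWt, if_pos hki, if_pos hki]
        linarith
      · rw [cc, if_neg hki, if_neg hki, if_neg hki]
        by_cases hkW : k ∈ Finset.Icc (t - (N' : ℤ)) (t-1)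
        · rw [if_pos hkW, if_pos hkW, if_pos hkW]
          linarith
        · rw [if_neg hkW, if_neg hkW, if_neg hkW]
          linarith
    | false =>
      have hfk : extSeq N N' (flip w) k = true := by rw [hext_k, hwk]; rfl
      have hv1 : indf i k (extSeq N N' w) = if k = i then 0 else 1 := by
        unfold indf; rw [hwk]; by_cases hki : k = i <;> simp [hki]
      have hv2 : indf i k (extSeq N N' (flip w)) = if k = i then 1 else 0 := by
        unfold indf; rw [hfk]; by_cases hki : k = i <;> simp [hki]
      rw [Fc, Fc, factor_false hwk, factor_true hfk, hlam_flip, ← hL, hv1, hv2]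
      by_cases hki : k = i
      · have hkWt : k ∈ Finset.Icc (t - (N' : ℤ)) (t-1) := by rw [hki]; exact hiWt
        rw [cc, if_pos hki, if_pos hkWt, if_pos hkWt, if_pos hki, if_pos hki]
        linarith
      · rw [cc, if_neg hki, if_neg hki, if_neg hki]
        by_cases hkW : k ∈ Finset.Icc (t - (N' : ℤ)) (t-1)
        · rw [if_pos hkW, if_pos hkW, if_pos hkW]
          linarith
        · rw [if_neg hkW, if_neg hkW, if_neg hkW]
          linarith
  -- assemble
  have hsplit : ∀ w : ↥(window N N') → Bool,
      ∏ s ∈ Finset.Icc lo k, Fc N' h Λ i t s (extSeq N N' w)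
      = (∏ s ∈ Finset.Icc lo (k-1), Fc N' h Λ i t s (extSeq N N' w))
         * Fc N' h Λ i t k (extSeq N N' w) :=
    fun w => prod_Icc_top lo k hk1 _
  have hQk : QQ N N' h Λ i t k = ∑ w : ↥(window N N') → Bool,
      (∏ s ∈ Finset.Icc lo (k-1), Fc N' h Λ i t s (extSeq N N' w))
        * Fc N' h Λ i t k (extSeq N N' w) :=
    Finset.sum_congr rfl (fun w _ => hsplit w)
  have hflipsum : QQ N N' h Λ i t k = ∑ w : ↥(window N N') → Bool,
      (∏ s ∈ Finset.Icc lo (k-1), Fc N' h Λ i t s (extSeq N N' w))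
        * Fc N' h Λ i t k (extSeq N N' (flip w)) := by
    rw [hQk]
    rw [← Function.Bijective.sum_comp hinv.bijective
      (fun w => (∏ s ∈ Finset.Icc lo (k-1), Fc N' h Λ i t s (extSeq N N' w))
        * Fc N' h Λ i t k (extSeq N N' w))]
    apply Finset.sum_congr rfl
    intro w _
    rw [hG w]
  calc cc N' h b B i t k * QQ N N' h Λ i t (k-1)
      = ∑ w : ↥(window N N') → Bool,
          (∏ s ∈ Finset.Icc lo (k-1), Fc N' h Λ i t s (extSeq N N' w)) * cc N' h b B i t k := by
        rw [QQ, Finset.mul_sum]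
        exact Finset.sum_congr rfl (fun w _ => mul_comm _ _)
    _ ≤ ∑ w : ↥(window N N') → Bool,
          (∏ s ∈ Finset.Icc lo (k-1), Fc N' h Λ i t s (extSeq N N' w))
            * (Fc N' h Λ i t k (extSeq N N' w) + Fc N' h Λ i t k (extSeq N N' (flip w))) :=
        Finset.sum_le_sum (fun w _ => mul_le_mul_of_nonneg_left (hpair w) (hGnn w))
    _ = 2 * QQ N N' h Λ i t k := by
        rw [two_mul]
        nth_rewrite 2 [hflipsum]
        rw [hQk, ← Finset.sum_add_distrib]
        exact Finset.sum_congr rfl (fun w _ => by ring)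

end Core

section Core2

variable {N N' : ℕ} {h : ℝ} {Λ : ℤ → (ℤ → Bool) → ℝ} {b B : ℝ}

lemma QQ_lower (hh : 0 < h) (hb : 0 < b)
    (hdep : ∀ (t : ℤ) (y y' : ℤ → Bool),
      (∀ i ∈ window N N', i < t → y i = y' i) → Λ t y = Λ t y')
    (hstar : ∀ t ∈ window N N', ∀ y : ℤ → Bool,
      0 < seqPMF N N' h Λ y → b ≤ Λ t y ∧ Λ t y ≤ B)
    (i t : ℤ) (hi1 : t - N' ≤ i) (hi2 : i ≤ t - 1) :
    ∀ n : ℕ, (-(N' : ℤ)) + n ≤ N →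
      (∏ s ∈ Finset.Icc (-(N' : ℤ) + 1) ((-(N' : ℤ)) + n), cc N' h b B i t s)
          * QQ N N' h Λ i t (-(N' : ℤ))
        ≤ 2^n * QQ N N' h Λ i t ((-(N' : ℤ)) + n) := by
  intro n
  induction n with
  | zero =>
    intro _
    have he : ((-(N' : ℤ)) + ((0:ℕ) : ℤ)) = -(N' : ℤ) := by push_cast; ring
    rw [he, Finset.Icc_eq_empty (by omega), Finset.prod_empty, pow_zero]
  | succ n ih =>
    intro hn1
    set k : ℤ := (-(N' : ℤ)) + ((n+1 : ℕ) : ℤ) with hk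
    have hkm : k - 1 = (-(N' : ℤ)) + (n : ℤ) := by push_cast [hk]; ring
    have hk1 : -(N' : ℤ) + 1 ≤ k := by omega
    have hk2 : k ≤ (N : ℤ) := hn1
    have hccnn : 0 ≤ cc N' h b B i t k := cc_nonneg hh hb i t k
    have ihn : (-(N' : ℤ)) + (n : ℕ) ≤ (N : ℤ) := by push_cast; push_cast [hk] at hn1; omega
    have ih' := ih ihn
    rw [← hkm] at ih'
    calc (∏ s ∈ Finset.Icc (-(N' : ℤ) + 1) k, cc N' h b B i t s) * QQ N N' h Λ i t (-(N' : ℤ))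
        = cc N' h b B i t k *
            ((∏ s ∈ Finset.Icc (-(N' : ℤ) + 1) (k-1), cc N' h b B i t s)
              * QQ N N' h Λ i t (-(N' : ℤ))) := by
          rw [prod_Icc_top _ _ hk1]; ring
      _ ≤ cc N' h b B i t k * (2^n * QQ N N' h Λ i t (k-1)) :=
          mul_le_mul_of_nonneg_left ih' hccnn
      _ = 2^n * (cc N' h b B i t k * QQ N N' h Λ i t (k-1)) := by ring
      _ ≤ 2^n * (2 * QQ N N' h Λ i t k) :=
          mul_le_mul_of_nonneg_left
            (step_ineq hh hb hdep hstar i t hi1 hi2 k hk1 hk2) (by positivity)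
      _ = 2^(n+1) * QQ N N' h Λ i t k := by ring

lemma core_bound (hN' : 1 ≤ N') (hh : 0 < h) (hb : 0 < b)
    (hdep : ∀ (t : ℤ) (y y' : ℤ → Bool),
      (∀ i ∈ window N N', i < t → y i = y' i) → Λ t y = Λ t y')
    (hstar : ∀ t ∈ window N N', ∀ y : ℤ → Bool,
      0 < seqPMF N N' h Λ y → b ≤ Λ t y ∧ Λ t y ≤ B)
    (i t : ℤ) (ht1 : 1 ≤ t) (htN : t ≤ (N : ℤ)) (hi1 : t - N' ≤ i) (hi2 : i ≤ t - 1) :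
    (1 - Real.exp (-(h*b))) * Real.exp (-(h * B * ((N' : ℝ) - 1)))
      ≤ ∑ w : ↥(window N N') → Bool, seqPMF N N' h Λ (extSeq N N' w) *
          ∏ j ∈ Finset.Icc (t - (N' : ℤ)) (t-1), indf i j (extSeq N N' w) := by
  have hiWt : i ∈ Finset.Icc (t - (N' : ℤ)) (t-1) := by rw [mem_Icc]; exact ⟨hi1, hi2⟩
  have hWtsub : Finset.Icc (t - (N' : ℤ)) (t-1) ⊆ Finset.Icc (-(N' : ℤ) + 1) (N : ℤ) := by
    intro x hx; rw [mem_Icc] at hx ⊢; omega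
  have hQ0 : QQ N N' h Λ i t (-(N' : ℤ)) = 2^(N+N') := by
    unfold QQ
    rw [Finset.Icc_eq_empty (by omega)]
    simp only [Finset.prod_empty]
    rw [Finset.sum_const, Finset.card_univ, nsmul_eq_mul, mul_one, Fintype.card_fun]
    rw [Fintype.card_coe]
    norm_num [window, Int.card_Icc]
    norm_cast
  have hmain := QQ_lower hh hb hdep hstar i t hi1 hi2 (N+N') (by push_cast; omega)
  have he : (-(N' : ℤ)) + ((N+N' : ℕ) : ℤ) = (N : ℤ) := by push_cast; ring
  rw [he, hQ0] at hmain
  have h2 : (0:ℝ) < 2^(N+N') := by positivity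
  have hCle : (∏ s ∈ Finset.Icc (-(N' : ℤ) + 1) (N : ℤ), cc N' h b B i t s)
      ≤ QQ N N' h Λ i t (N : ℤ) := by
    rw [mul_comm] at hmain
    exact le_of_mul_le_mul_left hmain h2
  have hprod : ∏ s ∈ Finset.Icc (-(N' : ℤ) + 1) (N : ℤ), cc N' h b B i t s
      = (1 - Real.exp (-(h*b))) * Real.exp (-(h * B * ((N' : ℝ) - 1))) := by
    rw [← Finset.prod_subset hWtsub (fun x _ hxn => by
      have hxi : x ≠ i := fun he' => hxn (he' ▸ hiWt)
      rw [cc, if_neg hxi, if_neg hxn])]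
    rw [Finset.prod_eq_mul_prod_sdiff_singleton_of_mem hiWt, cc, if_pos rfl]
    congr 1
    have hstep : ∀ x ∈ Finset.Icc (t - (N' : ℤ)) (t-1) \ {i},
        cc N' h b B i t x = Real.exp (-(h*B)) := by
      intro x hx
      rw [Finset.mem_sdiff, Finset.mem_singleton] at hx
      rw [cc, if_neg hx.2, if_pos hx.1]
    rw [Finset.prod_congr rfl hstep, Finset.prod_const]
    have hcard : (Finset.Icc (t - (N' : ℤ)) (t-1) \ {i}).card = N' - 1 := by
      rw [Finset.card_sdiff_of_subset (by simpa using hiWt), Finset.card_singleton, Int.card_Icc]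
      omega
    rw [hcard, ← Real.exp_nat_mul]
    congr 1
    push_cast [Nat.cast_sub hN']
    ring
  have hQN : QQ N N' h Λ i t (N : ℤ) = ∑ w : ↥(window N N') → Bool,
      seqPMF N N' h Λ (extSeq N N' w) *
        ∏ j ∈ Finset.Icc (t - (N' : ℤ)) (t-1), indf i j (extSeq N N' w) := by
    unfold QQ
    apply Finset.sum_congr rfl
    intro w _
    unfold Fc
    rw [Finset.prod_mul_distrib, seqPMF_eq]
    congr 1
    rw [← Finset.prod_subset hWtsub (fun x _ hxn => by rw [if_neg hxn])]
    exact Finset.prod_congr rfl (fun x hx => by rw [if_pos hx])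
  rw [← hQN, ← hprod]
  exact hCle

end Core2

section MainAux

lemma inner_eta (N N' : ℕ) (v : Param N N') (t : ℤ) (ht1 : 1 ≤ t) (htN : t ≤ (N : ℤ))
    (y : ℤ → Bool) :
    ⟪eta N N' t y, v⟫ = ∑ i ∈ Finset.Icc (t - (N' : ℤ)) (t-1), bval (y i) * zent N N' v i t := by
  rw [PiLp.inner_apply]
  simp only [RCLike.inner_apply, conj_trivial]
  have hv : ∀ p : ↥(kIdx N N'), v p = zent N N' v (p : ℤ × ℤ).1 (p : ℤ × ℤ).2 := by
    intro p
    simp [zent]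
  rw [show (∑ x, v.ofLp x * (eta N N' t y).ofLp x) = ∑ p, eta N N' t y p * v p from
    Finset.sum_congr rfl (fun p _ => mul_comm _ _)]
  calc ∑ p : ↥(kIdx N N'), eta N N' t y p * v p
      = ∑ p : ↥(kIdx N N'),
          (if ((p : ℤ × ℤ)).2 = t then bval (y ((p : ℤ × ℤ)).1) else 0)
            * zent N N' v ((p : ℤ × ℤ)).1 ((p : ℤ × ℤ)).2 := by
        apply Finset.sum_congr rfl
        intro p _
        rw [← hv p]; rfl
    _ = ∑ q ∈ kIdx N N', (if q.2 = t then bval (y q.1) else 0) * zent N N' v q.1 q.2 :=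
        Finset.sum_coe_sort (kIdx N N')
          (fun q => (if q.2 = t then bval (y q.1) else 0) * zent N N' v q.1 q.2)
    _ = ∑ q ∈ kIdx N N', (if q.2 = t then bval (y q.1) * zent N N' v q.1 q.2 else 0) := by
        apply Finset.sum_congr rfl
        intro q _
        rw [ite_mul, zero_mul]
    _ = ∑ q ∈ (kIdx N N').filter (fun q => q.2 = t), bval (y q.1) * zent N N' v q.1 q.2 :=
        (Finset.sum_filter _ _).symm
    _ = ∑ i ∈ Finset.Icc (t - (N' : ℤ)) (t-1), bval (y i) * zent N N' v i t := by
        apply Finset.sum_nbij' (i := fun q => q.1) (j := fun a => (a, t))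
        · intro q hq
          simp only [Finset.mem_filter, kIdx, Finset.mem_product, Finset.mem_Icc] at hq
          rw [Finset.mem_Icc]
          omega
        · intro a ha
          rw [Finset.mem_Icc] at ha
          simp only [Finset.mem_filter, kIdx, Finset.mem_product, Finset.mem_Icc,
            and_true]
          omega
        · intro q hq
          simp only [Finset.mem_filter] at hq
          exact Prod.ext rfl hq.2.symm
        · intro a _
          rfl
        · intro q hq
          simp only [Finset.mem_filter] at hq
          rw [hq.2]

lemma norm_sq_expand (N N' : ℕ) (v : Param N N') :
    ‖v‖^2 = ∑ t ∈ Finset.Icc (1 : ℤ) (N : ℤ), ∑ i ∈ Finset.Icc (t - (N' : ℤ)) (t-1),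
      (zent N N' v i t)^2 := by
  rw [← real_inner_self_eq_norm_sq, PiLp.inner_apply]
  simp only [RCLike.inner_apply, conj_trivial]
  have hv : ∀ p : ↥(kIdx N N'), v p = zent N N' v (p : ℤ × ℤ).1 (p : ℤ × ℤ).2 := by
    intro p
    simp [zent]
  calc ∑ p : ↥(kIdx N N'), v p * v p
      = ∑ p : ↥(kIdx N N'), (zent N N' v ((p : ℤ × ℤ)).1 ((p : ℤ × ℤ)).2)^2 := by
        apply Finset.sum_congr rfl
        intro p _
        rw [← hv p, sq]
    _ = ∑ q ∈ kIdx N N', (zent N N' v q.1 q.2)^2 :=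
        Finset.sum_coe_sort (kIdx N N') (fun q => (zent N N' v q.1 q.2)^2)
    _ = ∑ x ∈ (Finset.Icc (1 : ℤ) (N : ℤ)).sigma
          (fun t => Finset.Icc (t - (N' : ℤ)) (t-1)), (zent N N' v x.2 x.1)^2 := by
        apply Finset.sum_nbij' (i := fun q => (⟨q.2, q.1⟩ : (_ : ℤ) × ℤ))
          (j := fun x => (x.2, x.1))
        · intro q hq
          simp only [kIdx, Finset.mem_filter, Finset.mem_product, Finset.mem_Icc] at hq
          simp only [Finset.mem_sigma, Finset.mem_Icc]
          omega
        · intro x hx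
          simp only [Finset.mem_sigma, Finset.mem_Icc] at hx
          simp only [kIdx, Finset.mem_filter, Finset.mem_product, Finset.mem_Icc]
          refine ⟨⟨⟨?_, ?_⟩, ?_, ?_⟩, ?_, ?_⟩ <;> omega
        · intro q _
          rfl
        · intro x _
          rfl
        · intro q _
          rfl
    _ = ∑ t ∈ Finset.Icc (1 : ℤ) (N : ℤ), ∑ i ∈ Finset.Icc (t - (N' : ℤ)) (t-1),
          (zent N N' v i t)^2 := by
        rw [Finset.sum_sigma]

lemma pointwise_bound (N N' : ℕ) (v : Param N N') (t : ℤ) (y : ℤ → Bool) :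
    ∑ i ∈ Finset.Icc (t - (N' : ℤ)) (t-1),
        (∏ j ∈ Finset.Icc (t - (N' : ℤ)) (t-1), indf i j y) * (zent N N' v i t)^2
      ≤ (∑ i ∈ Finset.Icc (t - (N' : ℤ)) (t-1), bval (y i) * zent N N' v i t)^2 := by
  by_cases hex : ∃ i₀ ∈ Finset.Icc (t - (N' : ℤ)) (t-1),
      ∀ j ∈ Finset.Icc (t - (N' : ℤ)) (t-1), (y j = true ↔ j = i₀)
  · obtain ⟨i₀, hi₀, hpat⟩ := hex
    have hyi₀ : y i₀ = true := (hpat i₀ hi₀).mpr rfl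
    have h1 : ∑ i ∈ Finset.Icc (t - (N' : ℤ)) (t-1),
        (∏ j ∈ Finset.Icc (t - (N' : ℤ)) (t-1), indf i j y) * (zent N N' v i t)^2
        = (zent N N' v i₀ t)^2 := by
      rw [Finset.sum_eq_single i₀]
      · have hone : ∏ j ∈ Finset.Icc (t - (N' : ℤ)) (t-1), indf i₀ j y = 1 :=
          Finset.prod_eq_one (fun j hj => by rw [indf, if_pos (hpat j hj)])
        rw [hone, one_mul]
      · intro i hiW hne
        have hz : indf i i₀ y = 0 := by
          rw [indf, if_neg (fun hc => hne ((hc.mp hyi₀).symm))]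
        rw [Finset.prod_eq_zero hi₀ hz, zero_mul]
      · intro habs
        exact absurd hi₀ habs
    have h2 : ∑ i ∈ Finset.Icc (t - (N' : ℤ)) (t-1), bval (y i) * zent N N' v i t
        = zent N N' v i₀ t := by
      rw [Finset.sum_eq_single i₀]
      · rw [bval, hyi₀, if_pos rfl, one_mul]
      · intro i hiW hne
        have hyf : y i = false := by
          cases hyi : y i with
          | false => rfl
          | true => exact absurd ((hpat i hiW).mp hyi) hne
        rw [bval, hyf, if_neg (by simp), zero_mul]
      · intro habs
        exact absurd hi₀ habs
    rw [h1, h2]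
  · have h0 : ∀ i ∈ Finset.Icc (t - (N' : ℤ)) (t-1),
        (∏ j ∈ Finset.Icc (t - (N' : ℤ)) (t-1), indf i j y) * (zent N N' v i t)^2 = 0 := by
      intro i hiW
      have hz : ∃ j ∈ Finset.Icc (t - (N' : ℤ)) (t-1), indf i j y = 0 := by
        by_contra hc
        push_neg at hc
        refine hex ⟨i, hiW, fun j hj => ?_⟩
        by_contra hcc
        exact hc j hj (by rw [indf, if_neg hcc])
      obtain ⟨j, hj, hjz⟩ := hz
      rw [Finset.prod_eq_zero hj hjz, zero_mul]
    rw [Finset.sum_eq_zero h0]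
    positivity

end MainAux

/-- positive-definiteness of `E[∑_t η_t ⊗ η_t]`:
for every `v`, `E[∑_{t=1}^N ⟨η_t(y), v⟩²] ≥ ρ ‖v‖²` with
`ρ = (1 - e^{-h b}) e^{-h B (N'-1)}`. -/
theorem eta_eta_positive
    (N N' : ℕ) (hN : 1 ≤ N) (hN' : 1 ≤ N') (h : ℝ) (hh : 0 < h)
    (Λ : ℤ → (ℤ → Bool) → ℝ)
    (hdep : ∀ (t : ℤ) (y y' : ℤ → Bool),
      (∀ i ∈ window N N', i < t → y i = y' i) → Λ t y = Λ t y')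
    (b B : ℝ) (hb : 0 < b) (hbB : b ≤ B)
    (hstar : ∀ t ∈ window N N', ∀ y : ℤ → Bool,
      0 < seqPMF N N' h Λ y → b ≤ Λ t y ∧ Λ t y ≤ B) :
    ∀ v : Param N N',
      expect N N' h Λ (fun y => ∑ t ∈ Finset.Icc (1 : ℤ) (N : ℤ), ⟪eta N N' t y, v⟫ ^ 2)
        ≥ ((1 - Real.exp (-(h * b))) * Real.exp (-(h * B * ((N' : ℝ) - 1)))) * ‖v‖ ^ 2 := by
  intro v
  rw [ge_iff_le]
  calc ((1 - Real.exp (-(h * b))) * Real.exp (-(h * B * ((N' : ℝ) - 1)))) * ‖v‖ ^ 2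
      = ∑ t ∈ Finset.Icc (1 : ℤ) (N : ℤ), ∑ i ∈ Finset.Icc (t - (N' : ℤ)) (t-1),
          ((1 - Real.exp (-(h * b))) * Real.exp (-(h * B * ((N' : ℝ) - 1))))
            * (zent N N' v i t)^2 := by
        rw [norm_sq_expand, Finset.mul_sum]
        exact Finset.sum_congr rfl (fun t _ => by rw [Finset.mul_sum])
    _ ≤ ∑ t ∈ Finset.Icc (1 : ℤ) (N : ℤ), ∑ i ∈ Finset.Icc (t - (N' : ℤ)) (t-1),
          (∑ w : ↥(window N N') → Bool, seqPMF N N' h Λ (extSeq N N' w) *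
              ∏ j ∈ Finset.Icc (t - (N' : ℤ)) (t-1), indf i j (extSeq N N' w))
            * (zent N N' v i t)^2 := by
        apply Finset.sum_le_sum
        intro t ht
        apply Finset.sum_le_sum
        intro i hi
        rw [Finset.mem_Icc] at ht hi
        exact mul_le_mul_of_nonneg_right
          (core_bound hN' hh hb hdep hstar i t ht.1 ht.2 hi.1 hi.2) (sq_nonneg _)
    _ = ∑ w : ↥(window N N') → Bool, seqPMF N N' h Λ (extSeq N N' w) *
          ∑ t ∈ Finset.Icc (1 : ℤ) (N : ℤ), ∑ i ∈ Finset.Icc (t - (N' : ℤ)) (t-1),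
            (∏ j ∈ Finset.Icc (t - (N' : ℤ)) (t-1), indf i j (extSeq N N' w))
              * (zent N N' v i t)^2 := by
        simp only [Finset.sum_mul, Finset.mul_sum]
        rw [Finset.sum_congr rfl (fun t (_ : t ∈ Finset.Icc (1:ℤ) (N:ℤ)) => Finset.sum_comm)]
        rw [Finset.sum_comm]
        apply Finset.sum_congr rfl
        intro w _
        apply Finset.sum_congr rfl
        intro t _
        apply Finset.sum_congr rfl
        intro i _
        ring
    _ ≤ ∑ w : ↥(window N N') → Bool, seqPMF N N' h Λ (extSeq N N' w) *
          ∑ t ∈ Finset.Icc (1 : ℤ) (N : ℤ), ⟪eta N N' t (extSeq N N' w), v⟫ ^ 2 := by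
        apply Finset.sum_le_sum
        intro w _
        apply mul_le_mul_of_nonneg_left ?_ (le_of_lt (pmf_pos hh hb hdep hstar w))
        apply Finset.sum_le_sum
        intro t ht
        rw [Finset.mem_Icc] at ht
        rw [inner_eta N N' v t ht.1 ht.2]
        exact pointwise_bound N N' v t (extSeq N N' w)
    _ = expect N N' h Λ
          (fun y => ∑ t ∈ Finset.Icc (1 : ℤ) (N : ℤ), ⟪eta N N' t y, v⟫ ^ 2) := rfl
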